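/- Let 𝒜 be a unital associative ℂ-algebra with star operation, Θ a real antisymmetric n×n matrix, X : Fin n → 𝒜 satisfying [X_j, X_k] = 2iΘ_{jk}·1, N a real m×n matrix, L_l := Σ_p N_{lp}X_p, J a real antisymmetric m×m matrix, Ω := I_m + iJ with entries ω_{lp}, and M : Fin m → 𝒜 arbitrary. Then for all j,k: −2 Re( Σ_{l,p} [X_jX_k, L_l] ω_{lp} M_p ) = 4 Im( Σ_{l,p} ((ΘNᵀ)_{kl} X_j + (ΘNᵀ)_{jl} X_k) ω_{lp} M_p ), where Re a := (a + a*)/2 and Im a := (a − a*)/(2i). -/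

import Mathlib

open Matrix

/-- For an open quantum harmonic oscillator, entrywise:
`−2Re([X_jX_k, Lᵀ]ΩM) = 4Im((X_kΘ_{j•} + X_jΘ_{k•})NᵀΩM)`. -/
theorem stmt_11 {𝒜 : Type*} [Ring 𝒜] [Algebra ℂ 𝒜] [StarRing 𝒜] [StarModule ℂ 𝒜]
    {n m : ℕ} (Θ : Matrix (Fin n) (Fin n) ℝ) (hΘ : Θᵀ = -Θ)
    (X : Fin n → 𝒜)
    (hX : ∀ j k, X j * X k - X k * X j = (2 * Complex.I * (Θ j k : ℂ)) • (1 : 𝒜))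
    (hXsa : ∀ j, star (X j) = X j)
    (N : Matrix (Fin m) (Fin n) ℝ)
    (L : Fin m → 𝒜) (hL : ∀ l, L l = ∑ p, ((N l p : ℝ) : ℂ) • X p)
    (J : Matrix (Fin m) (Fin m) ℝ) (hJ : Jᵀ = -J)
    (ω : Fin m → Fin m → ℂ)
    (hω : ∀ l p, ω l p = (if l = p then 1 else 0) + Complex.I * (J l p : ℂ))
    (M : Fin m → 𝒜) :
    ∀ j k : Fin n,
      (-2 : ℂ) • (((1 : ℂ) / 2) •
        ((∑ l, ∑ p, ω l p • ((X j * X k * L l - L l * (X j * X k)) * M p))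
          + star (∑ l, ∑ p, ω l p • ((X j * X k * L l - L l * (X j * X k)) * M p))))
      = (4 : ℂ) • (((2 * Complex.I)⁻¹ : ℂ) •
        ((∑ l, ∑ p, ω l p •
            (((((Θ * Nᵀ) k l : ℝ) : ℂ) • X j + (((Θ * Nᵀ) j l : ℝ) : ℂ) • X k) * M p))
          - star (∑ l, ∑ p, ω l p •
            (((((Θ * Nᵀ) k l : ℝ) : ℂ) • X j + (((Θ * Nᵀ) j l : ℝ) : ℂ) • X k) * M p)))) := by
  intro j k
  -- commutator with a single X p
  have hcomm : ∀ p : Fin n, X j * X k * X p - X p * (X j * X k)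
      = (2 * Complex.I * (Θ k p : ℂ)) • X j + (2 * Complex.I * (Θ j p : ℂ)) • X k := by
    intro p
    have h1 := hX k p
    have h2 := hX j p
    have e : X j * X k * X p - X p * (X j * X k)
        = X j * (X k * X p - X p * X k) + (X j * X p - X p * X j) * X k := by
      noncomm_ring
    rw [e, h1, h2, mul_smul_comm, smul_mul_assoc, mul_one, one_mul]
  -- commutator with L l
  have hcommL : ∀ l : Fin m, X j * X k * L l - L l * (X j * X k)
      = (2 * Complex.I) • ((((Θ * Nᵀ) k l : ℝ) : ℂ) • X j + (((Θ * Nᵀ) j l : ℝ) : ℂ) • X k) := by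
    intro l
    rw [hL l, Finset.mul_sum, Finset.sum_mul, ← Finset.sum_sub_distrib]
    have : ∀ p ∈ Finset.univ, X j * X k * (((N l p : ℝ) : ℂ) • X p) - (((N l p : ℝ) : ℂ) • X p) * (X j * X k)
        = (2 * Complex.I) • (((((Θ k p : ℝ) * N l p : ℝ)) : ℂ) • X j + ((((Θ j p : ℝ) * N l p : ℝ)) : ℂ) • X k) := by
      intro p _
      rw [mul_smul_comm, smul_mul_assoc, ← smul_sub, hcomm p]
      push_cast
      rw [smul_add, smul_add, smul_smul, smul_smul, smul_smul, smul_smul]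
      ring_nf
    rw [Finset.sum_congr rfl this, ← Finset.smul_sum, Finset.sum_add_distrib,
      ← Finset.sum_smul, ← Finset.sum_smul]
    congr 2 <;> · push_cast [Matrix.mul_apply, Matrix.transpose_apply]; norm_num
  -- abbreviate the right-hand sum
  set T := ∑ l, ∑ p, ω l p •
      (((((Θ * Nᵀ) k l : ℝ) : ℂ) • X j + (((Θ * Nᵀ) j l : ℝ) : ℂ) • X k) * M p) with hT
  have hS : (∑ l, ∑ p, ω l p • ((X j * X k * L l - L l * (X j * X k)) * M p))
      = (2 * Complex.I) • T := by
    rw [hT, Finset.smul_sum]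
    refine Finset.sum_congr rfl fun l _ => ?_
    rw [Finset.smul_sum]
    refine Finset.sum_congr rfl fun p _ => ?_
    rw [hcommL l, smul_mul_assoc, smul_comm]
  rw [hS, star_smul]
  have hstar : (star (2 * Complex.I) : ℂ) = -(2 * Complex.I) := by simp
  rw [hstar]
  have hinv : ((2 * Complex.I)⁻¹ : ℂ) = -Complex.I / 2 := by
    rw [eq_div_iff (by norm_num : (2:ℂ) ≠ 0)]
    field_simp
    linear_combination (1 : ℂ) * Complex.I_sq
  rw [hinv]
  match_scalars <;> ring
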